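/- Let m ≥ 4. The cycle sun CS_m (obtained from the cycle on u₁, …, u_m by adding new vertices v₁, …, v_m with each u_i adjacent to v_{i−1} and v_i, indices taken modulo m) satisfies η(CS_m) = 2, and the wheel sun WS_m (obtained from CS_m by adding one further vertex w adjacent to u₁, …, u_m) satisfies η(WS_m) = 2. -/

import Mathlib

open Classical in
/-- Sum of the labels `f` over the open neighborhood of `v` in `G`. -/
noncomputable def nbrSum {V : Type*} [Fintype V] (G : SimpleGraph V) (f : V → ℕ) (v : V) : ℕ :=
  ∑ w ∈ Finset.univ.filter (fun w => G.Adj v w), f w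

open Classical in
/-- The degree of `v` in `G`. -/
noncomputable def deg {V : Type*} [Fintype V] (G : SimpleGraph V) (v : V) : ℕ :=
  (Finset.univ.filter (fun w => G.Adj v w)).card

/-- `f : V → {1,…,k}` is an additive `k`-coloring of `G`: labels lie in `{1,…,k}` and
adjacent vertices get distinct open-neighborhood sums. -/
def IsAdditiveColoring {V : Type*} [Fintype V] (G : SimpleGraph V) (k : ℕ) (f : V → ℕ) : Prop :=
  (∀ v, 1 ≤ f v ∧ f v ≤ k) ∧ ∀ u v, G.Adj u v → nbrSum G f u ≠ nbrSum G f v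

/-- The additive chromatic number `η(G)`: the least `k` admitting an additive `k`-coloring. -/
noncomputable def eta {V : Type*} [Fintype V] (G : SimpleGraph V) : ℕ :=
  sInf {k | ∃ f : V → ℕ, IsAdditiveColoring G k f}

/-- The cycle sun `CS_m`: `Sum.inl i` is `uᵢ`, `Sum.inr i` is `vᵢ`;
the `uᵢ` form a cycle, and `uᵢ` is adjacent to `vᵢ` and `v_{i-1}` (indices mod `m`). -/
def cycleSun (m : ℕ) : SimpleGraph (Fin m ⊕ Fin m) where
  Adj x y :=
    match x, y with
    | Sum.inl i, Sum.inl j => i ≠ j ∧ ((i.val + 1) % m = j.val ∨ (j.val + 1) % m = i.val)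
    | Sum.inl i, Sum.inr j => j = i ∨ (j.val + 1) % m = i.val
    | Sum.inr j, Sum.inl i => j = i ∨ (j.val + 1) % m = i.val
    | Sum.inr _, Sum.inr _ => False
  symm := by
    constructor
    rintro (i | i) (j | j) h
    · exact ⟨h.1.symm, h.2.symm⟩
    · exact h
    · exact h
    · exact h.elim
  loopless := by
    constructor
    rintro (i | i) h
    · exact h.1 rfl
    · exact h

/-- The wheel sun `WS_m`: the cycle sun together with a hub `Sum.inr 0`
adjacent to `u₁, …, u_m` (and to none of the `vᵢ`). -/
def wheelSun (m : ℕ) : SimpleGraph ((Fin m ⊕ Fin m) ⊕ Fin 1) where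
  Adj x y :=
    match x, y with
    | Sum.inl a, Sum.inl b => (cycleSun m).Adj a b
    | Sum.inl (Sum.inl _), Sum.inr _ => True
    | Sum.inr _, Sum.inl (Sum.inl _) => True
    | _, _ => False
  symm := by
    constructor
    rintro ((i | i) | w) ((j | j) | w') h
    all_goals first
      | exact (cycleSun m).adj_symm h
      | trivial
      | exact h.elim
  loopless := by
    constructor
    rintro ((i | i) | w) h
    · exact (cycleSun m).irrefl h
    · exact (cycleSun m).irrefl h
    · exact h

namespace CSun

def sIdx {m : ℕ} (i : Fin m) : Fin m :=
  ⟨if i.val + 1 = m then 0 else i.val + 1, by have := i.isLt; split <;> omega⟩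

def pIdx {m : ℕ} (i : Fin m) : Fin m :=
  ⟨if i.val = 0 then m - 1 else i.val - 1, by have := i.isLt; split <;> omega⟩

lemma succ_mod_eq {m : ℕ} (i j : Fin m) : ((i.val + 1) % m = j.val) ↔ j = sIdx i := by
  have hi := i.isLt; have hj := j.isLt
  rw [Fin.ext_iff]
  show _ ↔ j.val = (if i.val + 1 = m then 0 else i.val + 1)
  rcases Nat.lt_or_ge (i.val + 1) m with h | h
  · rw [Nat.mod_eq_of_lt h]; split <;> omega
  · have he : i.val + 1 = m := by omega
    rw [he, Nat.mod_self]; split <;> omega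

lemma sIdx_eq_iff {m : ℕ} (i j : Fin m) : sIdx j = i ↔ j = pIdx i := by
  have hi := i.isLt; have hj := j.isLt
  rw [Fin.ext_iff, Fin.ext_iff]
  show (if j.val + 1 = m then 0 else j.val + 1) = i.val ↔
    j.val = (if i.val = 0 then m - 1 else i.val - 1)
  split <;> split <;> omega

lemma pIdx_sIdx {m : ℕ} (i : Fin m) : pIdx (sIdx i) = i :=
  ((sIdx_eq_iff (sIdx i) i).mp rfl).symm

lemma sIdx_pIdx {m : ℕ} (i : Fin m) : sIdx (pIdx i) = i :=
  (sIdx_eq_iff i (pIdx i)).mpr rfl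

lemma ne_sIdx {m : ℕ} (hm : 2 ≤ m) (i : Fin m) : i ≠ sIdx i := by
  have hi := i.isLt
  intro h
  have h2 : i.val = (if i.val + 1 = m then 0 else i.val + 1) := congrArg Fin.val h
  revert h2; split <;> omega

lemma sIdx_ne_pIdx {m : ℕ} (hm : 3 ≤ m) (i : Fin m) : sIdx i ≠ pIdx i := by
  have hi := i.isLt
  intro h
  have h2 : (if i.val + 1 = m then 0 else i.val + 1) = (if i.val = 0 then m - 1 else i.val - 1) :=
    congrArg Fin.val h
  revert h2; split <;> split <;> omega

lemma adj_inl_inl {m : ℕ} (hm : 2 ≤ m) (i j : Fin m) :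
    (cycleSun m).Adj (Sum.inl i) (Sum.inl j) ↔ j = sIdx i ∨ j = pIdx i := by
  show (i ≠ j ∧ (((i.val + 1) % m = j.val) ∨ ((j.val + 1) % m = i.val))) ↔ _
  rw [succ_mod_eq i j, succ_mod_eq j i, eq_comm (a := i), sIdx_eq_iff]
  constructor
  · rintro ⟨_, h⟩; exact h
  · rintro (h | h)
    · subst h; exact ⟨ne_sIdx hm i, Or.inl rfl⟩
    · subst h
      refine ⟨?_, Or.inr rfl⟩
      intro he
      exact ne_sIdx hm (pIdx i) (by rw [sIdx_pIdx, ← he])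
  
lemma adj_inl_inr {m : ℕ} (i j : Fin m) :
    (cycleSun m).Adj (Sum.inl i) (Sum.inr j) ↔ j = i ∨ j = pIdx i := by
  show (j = i ∨ (j.val + 1) % m = i.val) ↔ _
  rw [succ_mod_eq j i, eq_comm (a := i), sIdx_eq_iff]

lemma sum_ite_or {m : ℕ} (p q : Fin m) (hpq : p ≠ q) (g : Fin m → ℕ) :
    (∑ x : Fin m, if x = p ∨ x = q then g x else 0) = g p + g q := by
  classical
  have h : ∀ x : Fin m, (if x = p ∨ x = q then g x else 0)
      = (if x = p then g x else 0) + (if x = q then g x else 0) := by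
    intro x
    by_cases h1 : x = p <;> by_cases h2 : x = q <;> simp_all
  rw [Finset.sum_congr rfl (fun x _ => h x), Finset.sum_add_distrib,
    Fintype.sum_ite_eq', Fintype.sum_ite_eq']

lemma nbrSum_inl {m : ℕ} (hm : 3 ≤ m) (f : Fin m ⊕ Fin m → ℕ) (i : Fin m) :
    nbrSum (cycleSun m) f (Sum.inl i) =
      f (Sum.inl (sIdx i)) + f (Sum.inl (pIdx i)) + f (Sum.inr i) + f (Sum.inr (pIdx i)) := by
  classical
  unfold nbrSum
  rw [Finset.sum_filter, Fintype.sum_sum_type]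
  have h2 : 2 ≤ m := by omega
  simp only [adj_inl_inl h2, adj_inl_inr]
  rw [sum_ite_or _ _ (sIdx_ne_pIdx hm i), sum_ite_or _ _ (fun h => ne_sIdx h2 (pIdx i) (by rw [sIdx_pIdx, ← h]))]
  ring

lemma adj_inr_inl {m : ℕ} (i j : Fin m) :
    (cycleSun m).Adj (Sum.inr j) (Sum.inl i) ↔ i = j ∨ i = sIdx j := by
  show (j = i ∨ (j.val + 1) % m = i.val) ↔ _
  rw [succ_mod_eq j i, eq_comm (a := j)]

lemma adj_inr_inr {m : ℕ} (i j : Fin m) :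
    (cycleSun m).Adj (Sum.inr j) (Sum.inr i) ↔ False := Iff.rfl

lemma nbrSum_inr {m : ℕ} (hm : 2 ≤ m) (f : Fin m ⊕ Fin m → ℕ) (j : Fin m) :
    nbrSum (cycleSun m) f (Sum.inr j) = f (Sum.inl j) + f (Sum.inl (sIdx j)) := by
  classical
  unfold nbrSum
  rw [Finset.sum_filter, Fintype.sum_sum_type]
  simp only [adj_inr_inl, adj_inr_inr, if_false]
  rw [sum_ite_or _ _ (ne_sIdx hm j)]
  simp


def fC (m : ℕ) : Fin m ⊕ Fin m → ℕ :=
  Sum.elim (fun i => 1 + i.val % 2) (fun i => 2 - i.val % 2)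

lemma key_uu {m : ℕ} (hm : 4 ≤ m) (i : Fin m) :
    nbrSum (cycleSun m) (fC m) (Sum.inl i) ≠ nbrSum (cycleSun m) (fC m) (Sum.inl (sIdx i)) := by
  have h3 : (3:ℕ) ≤ m := by omega
  rw [nbrSum_inl h3, nbrSum_inl h3, pIdx_sIdx]
  have hi := i.isLt
  simp only [fC, sIdx, pIdx, Sum.elim_inl, Sum.elim_inr]
  split_ifs <;> omega

lemma key_uv1 {m : ℕ} (hm : 4 ≤ m) (i : Fin m) :
    nbrSum (cycleSun m) (fC m) (Sum.inl i) ≠ nbrSum (cycleSun m) (fC m) (Sum.inr i) := by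
  have h3 : (3:ℕ) ≤ m := by omega
  rw [nbrSum_inl h3, nbrSum_inr (by omega)]
  have hi := i.isLt
  simp only [fC, sIdx, pIdx, Sum.elim_inl, Sum.elim_inr]
  split_ifs <;> omega

lemma key_uv2 {m : ℕ} (hm : 4 ≤ m) (i : Fin m) :
    nbrSum (cycleSun m) (fC m) (Sum.inl i) ≠ nbrSum (cycleSun m) (fC m) (Sum.inr (pIdx i)) := by
  have h3 : (3:ℕ) ≤ m := by omega
  rw [nbrSum_inl h3, nbrSum_inr (by omega), sIdx_pIdx]
  have hi := i.isLt
  simp only [fC, sIdx, pIdx, Sum.elim_inl, Sum.elim_inr]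
  split_ifs <;> omega

lemma cycle_coloring {m : ℕ} (hm : 4 ≤ m) : IsAdditiveColoring (cycleSun m) 2 (fC m) := by
  constructor
  · rintro (i | i) <;> simp only [fC, Sum.elim_inl, Sum.elim_inr] <;>
      constructor <;> omega
  · have h2 : (2:ℕ) ≤ m := by omega
    rintro (i | i) (j | j) h
    · rcases (adj_inl_inl h2 i j).mp h with rfl | rfl
      · exact key_uu hm i
      · have := key_uu hm (pIdx i)
        rw [sIdx_pIdx] at this
        exact this.symm
    · rcases (adj_inl_inr i j).mp h with rfl | rfl
      · exact key_uv1 hm _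
      · exact key_uv2 hm i
    · rcases (adj_inr_inl j i).mp h with rfl | rfl
      · exact (key_uv1 hm _).symm
      · have := key_uv2 hm (sIdx i)
        rw [pIdx_sIdx] at this
        exact this.symm
    · exact h.elim

lemma two_le_cycle {m : ℕ} (hm : 4 ≤ m) {k : ℕ} {f : Fin m ⊕ Fin m → ℕ}
    (h : IsAdditiveColoring (cycleSun m) k f) : 2 ≤ k := by
  have h3 : (3:ℕ) ≤ m := by omega
  by_contra hc
  push_neg at hc
  interval_cases k
  · obtain ⟨h1, h2⟩ := h.1 (Sum.inl ⟨0, by omega⟩)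
    omega
  · have hf : ∀ v, f v = 1 := fun v => le_antisymm (h.1 v).2 (h.1 v).1
    have hadj : (cycleSun m).Adj (Sum.inl ⟨0, by omega⟩) (Sum.inl (sIdx ⟨0, by omega⟩)) :=
      (adj_inl_inl (by omega) _ _).mpr (Or.inl rfl)
    have hne := h.2 _ _ hadj
    rw [nbrSum_inl h3, nbrSum_inl h3] at hne
    simp [hf] at hne

lemma eta_cycle {m : ℕ} (hm : 4 ≤ m) : eta (cycleSun m) = 2 := by
  have hmem : 2 ∈ {k | ∃ f, IsAdditiveColoring (cycleSun m) k f} :=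
    ⟨fC m, cycle_coloring hm⟩
  unfold eta
  refine le_antisymm (Nat.sInf_le hmem) ?_
  obtain ⟨f, hf⟩ := Nat.sInf_mem (Set.nonempty_of_mem hmem)
  exact two_le_cycle hm hf



lemma wadj_uu {m : ℕ} (i j : Fin m) :
    (wheelSun m).Adj (Sum.inl (Sum.inl i)) (Sum.inl (Sum.inl j)) ↔
      (cycleSun m).Adj (Sum.inl i) (Sum.inl j) := Iff.rfl

lemma wadj_uv {m : ℕ} (i j : Fin m) :
    (wheelSun m).Adj (Sum.inl (Sum.inl i)) (Sum.inl (Sum.inr j)) ↔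
      (cycleSun m).Adj (Sum.inl i) (Sum.inr j) := Iff.rfl

lemma wadj_uh {m : ℕ} (i : Fin m) (w : Fin 1) :
    (wheelSun m).Adj (Sum.inl (Sum.inl i)) (Sum.inr w) ↔ True := Iff.rfl

lemma wadj_vu {m : ℕ} (j i : Fin m) :
    (wheelSun m).Adj (Sum.inl (Sum.inr j)) (Sum.inl (Sum.inl i)) ↔
      (cycleSun m).Adj (Sum.inr j) (Sum.inl i) := Iff.rfl

lemma wadj_vv {m : ℕ} (j i : Fin m) :
    (wheelSun m).Adj (Sum.inl (Sum.inr j)) (Sum.inl (Sum.inr i)) ↔ False := Iff.rfl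

lemma wadj_vh {m : ℕ} (j : Fin m) (w : Fin 1) :
    (wheelSun m).Adj (Sum.inl (Sum.inr j)) (Sum.inr w) ↔ False := Iff.rfl

lemma wadj_hu {m : ℕ} (w : Fin 1) (i : Fin m) :
    (wheelSun m).Adj (Sum.inr w) (Sum.inl (Sum.inl i)) ↔ True := Iff.rfl

lemma wadj_hv {m : ℕ} (w : Fin 1) (j : Fin m) :
    (wheelSun m).Adj (Sum.inr w) (Sum.inl (Sum.inr j)) ↔ False := Iff.rfl

lemma wadj_hh {m : ℕ} (w w' : Fin 1) :
    (wheelSun m).Adj (Sum.inr w) (Sum.inr w') ↔ False := Iff.rfl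

lemma wheel_nbrSum_u {m : ℕ} (hm : 3 ≤ m) (f : (Fin m ⊕ Fin m) ⊕ Fin 1 → ℕ) (i : Fin m) :
    nbrSum (wheelSun m) f (Sum.inl (Sum.inl i)) =
      f (Sum.inl (Sum.inl (sIdx i))) + f (Sum.inl (Sum.inl (pIdx i))) +
      f (Sum.inl (Sum.inr i)) + f (Sum.inl (Sum.inr (pIdx i))) + f (Sum.inr 0) := by
  classical
  unfold nbrSum
  rw [Finset.sum_filter, Fintype.sum_sum_type, Fintype.sum_sum_type]
  have h2 : 2 ≤ m := by omega
  simp only [wadj_uu, wadj_uv, wadj_uh, adj_inl_inl h2, adj_inl_inr, if_true]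
  rw [sum_ite_or _ _ (sIdx_ne_pIdx hm i) (fun x => f (Sum.inl (Sum.inl x))),
    sum_ite_or _ _ (fun h => ne_sIdx h2 (pIdx i) (by rw [sIdx_pIdx, ← h]))
      (fun x => f (Sum.inl (Sum.inr x))), Fin.sum_univ_one]
  ring

lemma wheel_nbrSum_v {m : ℕ} (hm : 2 ≤ m) (f : (Fin m ⊕ Fin m) ⊕ Fin 1 → ℕ) (j : Fin m) :
    nbrSum (wheelSun m) f (Sum.inl (Sum.inr j)) =
      f (Sum.inl (Sum.inl j)) + f (Sum.inl (Sum.inl (sIdx j))) := by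
  classical
  unfold nbrSum
  rw [Finset.sum_filter, Fintype.sum_sum_type, Fintype.sum_sum_type]
  simp only [wadj_vu, wadj_vv, wadj_vh, adj_inr_inl, if_false]
  rw [sum_ite_or _ _ (ne_sIdx hm j) (fun x => f (Sum.inl (Sum.inl x)))]
  simp

lemma wheel_nbrSum_hub {m : ℕ} (f : (Fin m ⊕ Fin m) ⊕ Fin 1 → ℕ) (w : Fin 1) :
    nbrSum (wheelSun m) f (Sum.inr w) = ∑ i : Fin m, f (Sum.inl (Sum.inl i)) := by
  classical
  unfold nbrSum
  rw [Finset.sum_filter, Fintype.sum_sum_type, Fintype.sum_sum_type]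
  simp only [wadj_hu, wadj_hv, wadj_hh, if_true, if_false]
  simp

def cW (m x : ℕ) : ℕ := if m = 5 then (if 2 ≤ x ∧ x ≤ 3 then 1 else 2) else 2 - x % 2

def hW (m : ℕ) : ℕ := if m ≤ 5 then 2 else 1

def fW (m : ℕ) : (Fin m ⊕ Fin m) ⊕ Fin 1 → ℕ :=
  Sum.elim (Sum.elim (fun i => 1 + i.val % 2) (fun i => cW m i.val)) (fun _ => hW m)

lemma sum_range_mod2 (n : ℕ) : ∑ i ∈ Finset.range n, i % 2 = n / 2 := by
  induction n with
  | zero => simp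
  | succ n ih => rw [Finset.sum_range_succ, ih]; omega

lemma hub_sum (m : ℕ) : (∑ i : Fin m, fW m (Sum.inl (Sum.inl i))) = m + m / 2 := by
  simp only [fW, Sum.elim_inl]
  rw [Fin.sum_univ_eq_sum_range (fun i => 1 + i % 2) m, Finset.sum_add_distrib,
    sum_range_mod2]
  simp

lemma wkey_uu {m : ℕ} (hm : 4 ≤ m) (i : Fin m) :
    nbrSum (wheelSun m) (fW m) (Sum.inl (Sum.inl i)) ≠
      nbrSum (wheelSun m) (fW m) (Sum.inl (Sum.inl (sIdx i))) := by
  have h3 : (3:ℕ) ≤ m := by omega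
  rw [wheel_nbrSum_u h3, wheel_nbrSum_u h3, pIdx_sIdx]
  have hi := i.isLt
  simp only [fW, cW, sIdx, pIdx, Sum.elim_inl, Sum.elim_inr]
  split_ifs <;> omega

lemma wkey_uv1 {m : ℕ} (hm : 4 ≤ m) (i : Fin m) :
    nbrSum (wheelSun m) (fW m) (Sum.inl (Sum.inl i)) ≠
      nbrSum (wheelSun m) (fW m) (Sum.inl (Sum.inr i)) := by
  have h3 : (3:ℕ) ≤ m := by omega
  rw [wheel_nbrSum_u h3, wheel_nbrSum_v (by omega)]
  have hi := i.isLt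
  simp only [fW, cW, hW, sIdx, pIdx, Sum.elim_inl, Sum.elim_inr]
  split_ifs <;> omega

lemma wkey_uv2 {m : ℕ} (hm : 4 ≤ m) (i : Fin m) :
    nbrSum (wheelSun m) (fW m) (Sum.inl (Sum.inl i)) ≠
      nbrSum (wheelSun m) (fW m) (Sum.inl (Sum.inr (pIdx i))) := by
  have h3 : (3:ℕ) ≤ m := by omega
  rw [wheel_nbrSum_u h3, wheel_nbrSum_v (by omega), sIdx_pIdx]
  have hi := i.isLt
  simp only [fW, cW, hW, sIdx, pIdx, Sum.elim_inl, Sum.elim_inr]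
  split_ifs <;> omega

lemma wkey_hub {m : ℕ} (hm : 4 ≤ m) (w : Fin 1) (i : Fin m) :
    nbrSum (wheelSun m) (fW m) (Sum.inr w) ≠
      nbrSum (wheelSun m) (fW m) (Sum.inl (Sum.inl i)) := by
  have h3 : (3:ℕ) ≤ m := by omega
  rw [wheel_nbrSum_u h3, wheel_nbrSum_hub, hub_sum]
  have hi := i.isLt
  simp only [fW, cW, hW, sIdx, pIdx, Sum.elim_inl, Sum.elim_inr]
  split_ifs <;> omega

lemma wheel_coloring {m : ℕ} (hm : 4 ≤ m) : IsAdditiveColoring (wheelSun m) 2 (fW m) := by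
  constructor
  · rintro ((i | i) | w) <;>
      simp only [fW, cW, hW, Sum.elim_inl, Sum.elim_inr] <;>
      constructor <;> first | omega | (split_ifs <;> omega)
  · have h2 : (2:ℕ) ≤ m := by omega
    rintro ((i | i) | w) ((j | j) | w') h
    · rcases (adj_inl_inl h2 i j).mp h with rfl | rfl
      · exact wkey_uu hm i
      · have := wkey_uu hm (pIdx i)
        rw [sIdx_pIdx] at this
        exact this.symm
    · rcases (adj_inl_inr i j).mp h with rfl | rfl
      · exact wkey_uv1 hm _
      · exact wkey_uv2 hm i
    · exact (wkey_hub hm w' i).symm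
    · rcases (adj_inr_inl j i).mp h with rfl | rfl
      · exact (wkey_uv1 hm _).symm
      · have := wkey_uv2 hm (sIdx i)
        rw [pIdx_sIdx] at this
        exact this.symm
    · exact h.elim
    · exact h.elim
    · exact wkey_hub hm w j
    · exact h.elim
    · exact h.elim

lemma two_le_wheel {m : ℕ} (hm : 4 ≤ m) {k : ℕ} {f : (Fin m ⊕ Fin m) ⊕ Fin 1 → ℕ}
    (h : IsAdditiveColoring (wheelSun m) k f) : 2 ≤ k := by
  have h3 : (3:ℕ) ≤ m := by omega
  by_contra hc
  push_neg at hc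
  interval_cases k
  · obtain ⟨h1, h2⟩ := h.1 (Sum.inr 0)
    omega
  · have hf : ∀ v, f v = 1 := fun v => le_antisymm (h.1 v).2 (h.1 v).1
    have hadj : (wheelSun m).Adj (Sum.inl (Sum.inl ⟨0, by omega⟩))
        (Sum.inl (Sum.inl (sIdx ⟨0, by omega⟩))) :=
      (adj_inl_inl (by omega) _ _).mpr (Or.inl rfl)
    have hne := h.2 _ _ hadj
    rw [wheel_nbrSum_u h3, wheel_nbrSum_u h3] at hne
    simp [hf] at hne

lemma eta_wheel {m : ℕ} (hm : 4 ≤ m) : eta (wheelSun m) = 2 := by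
  have hmem : 2 ∈ {k | ∃ f, IsAdditiveColoring (wheelSun m) k f} :=
    ⟨fW m, wheel_coloring hm⟩
  unfold eta
  refine le_antisymm (Nat.sInf_le hmem) ?_
  obtain ⟨f, hf⟩ := Nat.sInf_mem (Set.nonempty_of_mem hmem)
  exact two_le_wheel hm hf


end CSun


/-- For `m ≥ 4`, the cycle sun and the wheel sun have additive chromatic number `2`. -/
theorem eta_cycleSun_wheelSun (m : ℕ) (hm : 4 ≤ m) :
    eta (cycleSun m) = 2 ∧ eta (wheelSun m) = 2 :=
  ⟨CSun.eta_cycle hm, CSun.eta_wheel hm⟩
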